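/- Let v₁, v₂, v₃ be nonzero real numbers and V₁, V₂, V₃ real numbers satisfying v₁² − v₂² + v₃² = 1, v₁V₁ − v₂V₂ + v₃V₃ = 0 and V₁/v₁ + V₂/v₂ + V₃/v₃ = 0. Then V₁² − V₂² + V₃² = −V₁² Θ / (v₁²(v₂² + v₃²)²), where Θ := −v₁² + v₁⁴ + v₂² − 10v₁²v₂² + 9v₁⁴v₂² + v₂⁴ − 9v₁²v₂⁴. -/
import Mathlib


/-- V₁² − V₂² + V₃² = −V₁² Θ / (v₁²(v₂² + v₃²)²), where
Θ = −v₁² + v₁⁴ + v₂² − 10v₁²v₂² + 9v₁⁴v₂² + v₂⁴ − 9v₁²v₂⁴. -/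
theorem stmt_4 (v₁ v₂ v₃ V₁ V₂ V₃ : ℝ)
    (hv₁ : v₁ ≠ 0) (hv₂ : v₂ ≠ 0) (hv₃ : v₃ ≠ 0)
    (h0 : v₁ ^ 2 - v₂ ^ 2 + v₃ ^ 2 = 1)
    (h1 : v₁ * V₁ - v₂ * V₂ + v₃ * V₃ = 0)
    (h2 : V₁ / v₁ + V₂ / v₂ + V₃ / v₃ = 0) :
    V₁ ^ 2 - V₂ ^ 2 + V₃ ^ 2 =
      -(V₁ ^ 2 * (-v₁ ^ 2 + v₁ ^ 4 + v₂ ^ 2 - 10 * v₁ ^ 2 * v₂ ^ 2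
        + 9 * v₁ ^ 4 * v₂ ^ 2 + v₂ ^ 4 - 9 * v₁ ^ 2 * v₂ ^ 4))
        / (v₁ ^ 2 * (v₂ ^ 2 + v₃ ^ 2) ^ 2) := by
  have h2' : v₂ * v₃ * V₁ + v₁ * v₃ * V₂ + v₁ * v₂ * V₃ = 0 := by
    field_simp at h2; linarith
  have hV2 : v₁ * (v₂ ^ 2 + v₃ ^ 2) * V₂ = V₁ * v₂ * (v₁ ^ 2 - v₃ ^ 2) := by
    linear_combination v₃ * h2' - v₁ * v₂ * h1
  have hV3 : v₁ * (v₂ ^ 2 + v₃ ^ 2) * V₃ = -(V₁ * v₃ * (v₁ ^ 2 + v₂ ^ 2)) := by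
    linear_combination v₁ * v₃ * h1 + v₂ * h2'
  have e2 : v₁ ^ 2 * (v₂ ^ 2 + v₃ ^ 2) ^ 2 * V₂ ^ 2
      = V₁ ^ 2 * v₂ ^ 2 * (v₁ ^ 2 - v₃ ^ 2) ^ 2 := by
    linear_combination (v₁ * (v₂ ^ 2 + v₃ ^ 2) * V₂ + V₁ * v₂ * (v₁ ^ 2 - v₃ ^ 2)) * hV2
  have e3 : v₁ ^ 2 * (v₂ ^ 2 + v₃ ^ 2) ^ 2 * V₃ ^ 2
      = V₁ ^ 2 * v₃ ^ 2 * (v₁ ^ 2 + v₂ ^ 2) ^ 2 := by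
    linear_combination (v₁ * (v₂ ^ 2 + v₃ ^ 2) * V₃ - V₁ * v₃ * (v₁ ^ 2 + v₂ ^ 2)) * hV3
  have hden : v₁ ^ 2 * (v₂ ^ 2 + v₃ ^ 2) ^ 2 ≠ 0 := by positivity
  rw [eq_div_iff hden]
  linear_combination -e2 + e3 +
    (V₁ ^ 2 * ((v₁ ^ 2 - v₂ ^ 2) * v₃ ^ 2 + 8 * v₁ ^ 2 * v₂ ^ 2 + v₁ ^ 2 - v₂ ^ 2)) * h0
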